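/- Let G be a connected strongly regular graph of diameter 2 with parameters (ν, k, λ, μ), and let r = (1/2)·((λ − μ) + √((λ − μ)^2 + 4(k − μ))) be the larger eigenvalue of its adjacency matrix distinct from k. Then the least distortion of an embedding of G into Euclidean space satisfies c_2(G)^2 = 4·(ν − k − 1)·(k − r) / (k·(ν − k + r)). -/

import Mathlib

open scoped BigOperators
open Matrix Finset SimpleGraph

private lemma trace_idem_nat {V : Type*} [Fintype V] [DecidableEq V]
    (E : Matrix V V ℝ) (h : E * E = E) : ∃ f : ℕ, E.trace = (f : ℝ) := by
  have h2 : Matrix.toLin' E ∘ₗ Matrix.toLin' E = Matrix.toLin' E := by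
    rw [← Matrix.toLin'_mul, h]
  obtain ⟨p, hp⟩ := (LinearMap.isProj_iff_isIdempotentElem _).mpr h2
  refine ⟨Module.finrank ℝ p, ?_⟩
  have ht := hp.trace
  rw [LinearMap.trace_eq_matrix_trace ℝ (Pi.basisFun ℝ V), LinearMap.toMatrix_eq_toMatrix',
    LinearMap.toMatrix'_toLin'] at ht
  exact ht

private lemma gram_vectors {V : Type*} [Fintype V] [DecidableEq V]
    (M : Matrix V V ℝ) (hM : M.PosSemidef) :
    ∃ ρ : V → EuclideanSpace ℝ (Fin (Fintype.card V)),
      ∀ x y : V, ‖ρ x - ρ y‖ ^ 2 = M x x + M y y - 2 * M x y := by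
  obtain ⟨B, hB⟩ : ∃ B : Matrix V V ℝ, M = Bᴴ * B := by
    open scoped MatrixOrder in exact CStarAlgebra.nonneg_iff_eq_star_mul_self.mp hM.nonneg
  set e := Fintype.equivFin V
  refine ⟨fun x => (WithLp.toLp 2 (fun i => B (e.symm i) x) : EuclideanSpace ℝ (Fin (Fintype.card V))), fun x y => ?_⟩
  have hnorm : ∀ u : EuclideanSpace ℝ (Fin (Fintype.card V)), ‖u‖ ^ 2 = ∑ i, u i ^ 2 := by
    intro u
    rw [EuclideanSpace.norm_eq, Real.sq_sqrt (by positivity)]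
    simp [sq_abs]
  have hMapp : ∀ x y : V, M x y = ∑ z : V, B z x * B z y := by
    intro x y
    rw [hB]
    simp [Matrix.mul_apply, Matrix.conjTranspose_apply]
  rw [hnorm]
  have : ∀ i : Fin (Fintype.card V),
      ((WithLp.toLp 2 (fun i => B (e.symm i) x) : EuclideanSpace ℝ (Fin (Fintype.card V))) -
        WithLp.toLp 2 (fun i => B (e.symm i) y)) i = B (e.symm i) x - B (e.symm i) y := by
    intro i; rfl
  simp_rw [this]
  rw [Equiv.sum_comp e.symm (fun z => (B z x - B z y) ^ 2)]
  have expand : ∀ z, (B z x - B z y) ^ 2 =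
      B z x * B z x + B z y * B z y - 2 * (B z x * B z y) := fun z => by ring
  simp_rw [expand]
  rw [Finset.sum_sub_distrib, Finset.sum_add_distrib, ← Finset.mul_sum,
    ← hMapp x x, ← hMapp y y, ← hMapp x y]

private lemma quad_sum_nonpos {V : Type*} [Fintype V]
    (Q : Matrix V V ℝ) (hQ : Q.PosSemidef)
    (hrow : ∀ x : V, ∑ y : V, Q x y = 0) (g : V → ℝ) :
    ∑ x : V, ∑ y : V, Q x y * (g x - g y) ^ 2 ≤ 0 := by
  have hsym : ∀ x y : V, Q y x = Q x y := by
    intro x y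
    have := hQ.isHermitian.apply y x
    simpa using this.symm
  have key : ∑ x : V, ∑ y : V, Q x y * (g x - g y) ^ 2
      = -2 * (g ⬝ᵥ Q.mulVec g) := by
    have expand : ∀ x y : V, Q x y * (g x - g y) ^ 2
        = Q x y * g x ^ 2 + Q x y * g y ^ 2 - 2 * (g x * (Q x y * g y)) := by
      intros; ring
    simp_rw [expand, Finset.sum_sub_distrib, Finset.sum_add_distrib]
    have h1 : ∑ x : V, ∑ y : V, Q x y * g x ^ 2 = 0 := by
      refine Finset.sum_eq_zero fun x _ => ?_
      rw [← Finset.sum_mul, hrow]; ring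
    have h2 : ∑ x : V, ∑ y : V, Q x y * g y ^ 2 = 0 := by
      rw [Finset.sum_comm]
      refine Finset.sum_eq_zero fun y _ => ?_
      simp_rw [hsym]
      rw [← Finset.sum_mul, hrow]; ring
    have h3 : ∑ x : V, ∑ y : V, 2 * (g x * (Q x y * g y))
        = 2 * (g ⬝ᵥ Q.mulVec g) := by
      simp only [dotProduct, Matrix.mulVec, Finset.mul_sum]
    rw [h1, h2, h3]
    ring
  rw [key]
  have := hQ.dotProduct_mulVec_nonneg g
  simp only [star_trivial] at this
  nlinarith [this]

private lemma psd_of_sq {V : Type*} [Fintype V] (Q : Matrix V V ℝ)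
    (hsym : ∀ i j : V, Q j i = Q i j) (c : ℝ) (hc : 0 < c) (hQQ : Q * Q = c • Q) :
    Q.PosSemidef := by
  have hherm : Q.IsHermitian := by
    ext i j
    simp [Matrix.conjTranspose_apply, hsym i j]
  have h := Matrix.posSemidef_conjTranspose_mul_self Q
  rw [show Qᴴ = Q from hherm, hQQ] at h
  refine .of_dotProduct_mulVec_nonneg hherm fun x => ?_
  have h2 := h.dotProduct_mulVec_nonneg x
  rw [Matrix.smul_mulVec, dotProduct_smul] at h2
  simp only [smul_eq_mul] at h2
  nlinarith [h2]

private lemma dist_two_structure {V : Type*} (G : SimpleGraph V) {x y : V}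
    (h2 : G.dist x y = 2) (hreach : G.Reachable x y) :
    x ≠ y ∧ ¬G.Adj x y ∧ ∃ z : V, G.Adj x z ∧ G.Adj z y := by
  have hne : x ≠ y := by
    rintro rfl; rw [SimpleGraph.dist_self] at h2; omega
  have hnadj : ¬G.Adj x y := by
    intro h
    rw [← SimpleGraph.dist_eq_one_iff_adj] at h
    omega
  obtain ⟨p, hp⟩ := hreach.exists_walk_length_eq_dist
  rw [h2] at hp
  refine ⟨hne, hnadj, ?_⟩
  match p, hp with
  | SimpleGraph.Walk.cons h (SimpleGraph.Walk.cons h' SimpleGraph.Walk.nil), _ =>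
    exact ⟨_, h, h'⟩

private lemma srg_facts {V : Type*} [Fintype V] {G : SimpleGraph V} [DecidableRel G.Adj]
    {ν k l μ : ℕ} (hsrg : G.IsSRGWith ν k l μ)
    {x y z : V} (hne : x ≠ y) (hnadj : ¬G.Adj x y) (hxz : G.Adj x z) (hzy : G.Adj z y) :
    1 ≤ μ ∧ μ ≤ k ∧ l + 1 ≤ k ∧ k + 2 ≤ ν ∧ l + 1 ≠ k := by
  classical
  have hdeg : ∀ v : V, (G.neighborFinset v).card = k := fun v => by
    rw [card_neighborFinset_eq_degree]; exact hsrg.regular v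
  have hzmem : z ∈ G.commonNeighbors x y := ⟨hxz, hzy.symm⟩
  have hμ1 : 1 ≤ μ := by
    rw [← hsrg.of_not_adj hne hnadj]
    exact Fintype.card_pos_iff.mpr ⟨⟨z, hzmem⟩⟩
  have hμk : μ ≤ k := by
    rw [← hsrg.of_not_adj hne hnadj, ← hdeg x, ← Set.toFinset_card]
    apply Finset.card_le_card
    intro u hu
    rw [Set.mem_toFinset] at hu
    rw [mem_neighborFinset]
    exact hu.1
  have hsub : (G.commonNeighbors x z).toFinset ⊆ (G.neighborFinset z).erase x := by
    intro u hu
    rw [Set.mem_toFinset] at hu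
    rw [Finset.mem_erase, mem_neighborFinset]
    refine ⟨?_, hu.2⟩
    rintro rfl
    exact G.irrefl hu.1
  have hcxz : (G.commonNeighbors x z).toFinset.card = l := by
    rw [Set.toFinset_card]; exact hsrg.of_adj x z hxz
  have herase : ((G.neighborFinset z).erase x).card = k - 1 := by
    rw [Finset.card_erase_of_mem, hdeg z]
    rw [mem_neighborFinset]; exact hxz.symm
  have hk1 : 1 ≤ k := by
    rw [← hdeg x]
    exact Finset.card_pos.mpr ⟨z, by rw [mem_neighborFinset]; exact hxz⟩
  have hlk : l + 1 ≤ k := by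
    have := Finset.card_le_card hsub
    rw [hcxz, herase] at this
    omega
  have hν : k + 2 ≤ ν := by
    have hxx : x ∉ G.neighborFinset x := G.notMem_neighborFinset_self x
    have hyy : y ∉ G.neighborFinset x := by
      rw [mem_neighborFinset]; exact hnadj
    have hcard : (insert x (insert y (G.neighborFinset x))).card = k + 2 := by
      rw [Finset.card_insert_of_notMem, Finset.card_insert_of_notMem hyy, hdeg x]
      simp only [Finset.mem_insert]
      push_neg
      exact ⟨hne, hxx⟩
    calc k + 2 = (insert x (insert y (G.neighborFinset x))).card := hcard.symm
    _ ≤ Fintype.card V := Finset.card_le_card (Finset.subset_univ _) |>.trans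
        (by rw [Finset.card_univ])
    _ = ν := hsrg.card
  have hlne : l + 1 ≠ k := by
    intro hl
    have hcard_eq : (G.commonNeighbors x z).toFinset = (G.neighborFinset z).erase x := by
      apply Finset.eq_of_subset_of_card_le hsub
      rw [hcxz, herase]; omega
    have hy : y ∈ (G.neighborFinset z).erase x := by
      rw [Finset.mem_erase, mem_neighborFinset]
      exact ⟨hne.symm, hzy⟩
    rw [← hcard_eq, Set.mem_toFinset] at hy
    exact hnadj hy.1
  exact ⟨hμ1, hμk, hlk, hν, hlne⟩

/-- The least distortion `c₂(G)` of an embedding of the connected graph `G`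
(with its shortest path metric) into Euclidean space. -/
noncomputable def leastDistortion {V : Type*} [Fintype V] (G : SimpleGraph V) : ℝ :=
  sInf {D : ℝ | ∃ (m : ℕ) (ρ : V → EuclideanSpace ℝ (Fin m)),
    ∀ x y : V, (G.dist x y : ℝ) ≤ ‖ρ x - ρ y‖ ∧ ‖ρ x - ρ y‖ ≤ D * (G.dist x y : ℝ)}

set_option maxHeartbeats 2000000 in
/-- For a connected strongly regular graph of diameter `2` with parameters
`(ν, k, λ, μ)` and larger nontrivial eigenvalue
`r = ((λ−μ) + √((λ−μ)² + 4(k−μ)))/2` we have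
`c₂(G)² = 4(ν−k−1)(k−r)/(k(ν−k+r))`. -/
theorem stmt13 {V : Type*} [Fintype V] (G : SimpleGraph V) [DecidableRel G.Adj]
    (ν k l μ : ℕ) (hsrg : G.IsSRGWith ν k l μ) (hconn : G.Connected)
    (hdiam_le : ∀ x y : V, G.dist x y ≤ 2) (hdiam_eq : ∃ x y : V, G.dist x y = 2)
    (r : ℝ)
    (hr : r = (((l : ℝ) - (μ : ℝ)) +
      Real.sqrt (((l : ℝ) - (μ : ℝ)) ^ 2 + 4 * ((k : ℝ) - (μ : ℝ)))) / 2) :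
    leastDistortion G ^ 2 =
      4 * ((ν : ℝ) - (k : ℝ) - 1) * ((k : ℝ) - r) /
        ((k : ℝ) * ((ν : ℝ) - (k : ℝ) + r)) := by
  classical
  obtain ⟨x₀, y₀, hxy2⟩ := hdiam_eq
  obtain ⟨hne₀, hnadj₀, z₀, hxz₀, hzy₀⟩ := dist_two_structure G hxy2 (hconn x₀ y₀)
  obtain ⟨hμ1, hμk, hlk, hνk, hlne⟩ := srg_facts hsrg hne₀ hnadj₀ hxz₀ hzy₀
  -- real casts of the combinatorial facts
  have hk1 : 1 ≤ k := by omega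
  have hk1R : (1 : ℝ) ≤ k := by exact_mod_cast hk1
  have hμ1R : (1 : ℝ) ≤ μ := by exact_mod_cast hμ1
  have hμkR : (μ : ℝ) ≤ k := by exact_mod_cast hμk
  have hlkR : (l : ℝ) + 1 ≤ k := by exact_mod_cast hlk
  have hνkR : (k : ℝ) + 2 ≤ ν := by exact_mod_cast hνk
  -- the square root
  have hΔ0 : (0 : ℝ) ≤ ((l : ℝ) - μ) ^ 2 + 4 * ((k : ℝ) - μ) := by nlinarith
  obtain ⟨w, hw_def⟩ : ∃ w : ℝ,
      w = Real.sqrt (((l : ℝ) - μ) ^ 2 + 4 * ((k : ℝ) - μ)) := ⟨_, rfl⟩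
  have hw2 : w ^ 2 = ((l : ℝ) - μ) ^ 2 + 4 * ((k : ℝ) - μ) := by
    rw [hw_def]; exact Real.sq_sqrt hΔ0
  have hw0 : 0 ≤ w := by rw [hw_def]; exact Real.sqrt_nonneg _
  have hrw : r = (((l : ℝ) - μ) + w) / 2 := by rw [hr, hw_def]
  obtain ⟨s, hsw⟩ : ∃ s : ℝ, s = (((l : ℝ) - μ) - w) / 2 := ⟨_, rfl⟩
  have hsum : r + s = (l : ℝ) - μ := by rw [hrw, hsw]; ring
  have hprod : r * s = (μ : ℝ) - k := by
    rw [hrw, hsw]; linear_combination (-1/4 : ℝ) * hw2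
  have hμltk_or : μ < k ∨ l < μ := by omega
  have hΔpos : (0 : ℝ) < ((l : ℝ) - μ) ^ 2 + 4 * ((k : ℝ) - μ) := by
    rcases hμltk_or with h | h
    · have : (μ : ℝ) + 1 ≤ k := by exact_mod_cast h
      nlinarith
    · have : (l : ℝ) + 1 ≤ μ := by exact_mod_cast h
      nlinarith
  have hwpos : 0 < w := by
    rw [hw_def]; exact Real.sqrt_pos.mpr hΔpos
  have hw2' : (((l : ℝ) - μ)) ^ 2 < w ^ 2 ∨ (l:ℝ) - μ < 0 := by
    rcases hμltk_or with h | h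
    · left; have : (μ : ℝ) + 1 ≤ k := by exact_mod_cast h
      nlinarith
    · right; have : (l : ℝ) + 1 ≤ μ := by exact_mod_cast h
      linarith
  have hs0 : s < 0 := by
    rcases hw2' with h | h
    · rw [hsw]
      nlinarith
    · rw [hsw]
      nlinarith
  have hr0 : 0 ≤ r := by
    have habs : |(l : ℝ) - μ| ≤ w := by
      rw [hw_def, ← Real.sqrt_sq_eq_abs]
      exact Real.sqrt_le_sqrt (by nlinarith)
    have := neg_abs_le ((l : ℝ) - μ)
    rw [hrw]; linarith
  have hrk : r < k := by
    have hpos : (0 : ℝ) < 2 * (k : ℝ) - ((l : ℝ) - μ) := by linarith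
    have h1 : w ^ 2 < (2 * (k : ℝ) - ((l : ℝ) - μ)) ^ 2 := by nlinarith [hμ1R, hk1R, hlkR, hμkR, hw2]
    have h2 : w < 2 * (k : ℝ) - ((l : ℝ) - μ) := by nlinarith [hw0, h1, hpos]
    rw [hrw]; linarith
  have hsk : s < k := by linarith
  have hrs : r - s = w := by rw [hrw, hsw]; ring
  -- the parameter identity
  obtain ⟨a, ha⟩ : ∃ a, k = l + 1 + a := ⟨k - (l + 1), by omega⟩
  obtain ⟨b, hb⟩ : ∃ b, ν = k + 2 + b := ⟨ν - (k + 2), by omega⟩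
  have hpe := SimpleGraph.IsSRGWith.param_eq G hsrg (by omega)
  have e1 : k - l - 1 = a := by omega
  have e2 : ν - k - 1 = b + 1 := by omega
  rw [e1, e2] at hpe
  have hpeR : (k : ℝ) * a = ((b : ℝ) + 1) * μ := by exact_mod_cast hpe
  have haR : (k : ℝ) = (l : ℝ) + 1 + a := by exact_mod_cast ha
  have hbR : (ν : ℝ) = (k : ℝ) + 2 + b := by exact_mod_cast hb
  have hstar : (μ : ℝ) * ((ν : ℝ) - 1 - k) = -(k : ℝ) * (1 + r) * (1 + s) := by
    linear_combination (μ : ℝ) * hbR - (k : ℝ) * haR - hpeR + (k : ℝ) * hsum +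
      (k : ℝ) * hprod
  have hκ : (μ : ℝ) * ν = ((k : ℝ) - r) * ((k : ℝ) - s) := by
    linear_combination hstar - ((k : ℝ) + 1) * hprod
  -- matrices
  obtain ⟨A, hAdef⟩ : ∃ A : Matrix V V ℝ, A = G.adjMatrix ℝ := ⟨_, rfl⟩
  obtain ⟨J, hJdef⟩ : ∃ J : Matrix V V ℝ, J = Matrix.of (fun _ _ => (1 : ℝ)) := ⟨_, rfl⟩
  have hJapp : ∀ i j : V, J i j = 1 := fun i j => by rw [hJdef]; rfl
  have hAapp : ∀ i j : V, A i j = if G.Adj i j then 1 else 0 := fun i j => by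
    rw [hAdef]; simp [SimpleGraph.adjMatrix_apply]
  have hdegR : ∀ v : V, ∑ y : V, A v y = (k : ℝ) := by
    intro v
    simp_rw [hAapp]
    rw [Finset.sum_boole]
    rw [← SimpleGraph.neighborFinset_eq_filter, SimpleGraph.card_neighborFinset_eq_degree]
    exact_mod_cast hsrg.regular v
  have hcolR : ∀ v : V, ∑ y : V, A y v = (k : ℝ) := by
    intro v
    have : ∀ y : V, A y v = A v y := fun y => by
      simp [hAapp, SimpleGraph.adj_comm]
    simp_rw [this]
    exact hdegR v
  have h1row : ∀ x : V, ∑ y : V, (1 : Matrix V V ℝ) x y = 1 := by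
    intro x
    simp [Matrix.one_apply]
  have hνcard : (Fintype.card V : ℝ) = (ν : ℝ) := by exact_mod_cast hsrg.card
  have hJrow : ∀ x : V, ∑ y : V, J x y = (ν : ℝ) := by
    intro x
    simp_rw [hJapp]
    rw [Finset.sum_const, Finset.card_univ, nsmul_eq_mul, mul_one, hνcard]
  have hCJ : Gᶜ.adjMatrix ℝ = J - 1 - A := by
    ext i j
    simp only [Matrix.sub_apply, hJapp, hAapp, SimpleGraph.adjMatrix_apply,
      SimpleGraph.compl_adj, Matrix.one_apply]
    by_cases hij : i = j
    · subst hij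
      simp [G.irrefl]
    · by_cases hadj : G.Adj i j
      · simp [hij, hadj]
      · simp [hij, hadj]
  have hA2 : A * A = ((k : ℝ) - μ) • 1 + ((l : ℝ) - μ) • A + (μ : ℝ) • J := by
    have hm := hsrg.matrix_eq (α := ℝ)
    rw [pow_two] at hm
    simp only [← Nat.cast_smul_eq_nsmul ℝ] at hm
    rw [hCJ, ← hAdef] at hm
    rw [hm]
    module
  have hA2' : A * A = (-(r * s)) • 1 + (r + s) • A + (μ : ℝ) • J := by
    rw [hA2, hsum]
    have hkμ : (k : ℝ) - μ = -(r * s) := by linarith [hprod]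
    rw [hkμ]
  have hAJ : A * J = (k : ℝ) • J := by
    ext i j
    rw [Matrix.mul_apply]
    simp_rw [hJapp, mul_one, Matrix.smul_apply, hJapp, smul_eq_mul, mul_one]
    exact hdegR i
  have hJA : J * A = (k : ℝ) • J := by
    ext i j
    rw [Matrix.mul_apply]
    simp_rw [hJapp, one_mul, Matrix.smul_apply, hJapp, smul_eq_mul, mul_one]
    exact hcolR j
  have hJJ : J * J = (ν : ℝ) • J := by
    ext i j
    rw [Matrix.mul_apply]
    simp_rw [hJapp, one_mul, Matrix.smul_apply, hJapp, smul_eq_mul, mul_one]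
    rw [Finset.sum_const, Finset.card_univ, nsmul_eq_mul, mul_one, hνcard]
  -- the two positive semidefinite matrices
  obtain ⟨P, hPdef⟩ : ∃ P : Matrix V V ℝ,
      P = ((k : ℝ) - r) • A - (s * ((k : ℝ) - r)) • 1 - (μ : ℝ) • J := ⟨_, rfl⟩
  obtain ⟨Q, hQdef⟩ : ∃ Q : Matrix V V ℝ,
      Q = (r * ((k : ℝ) - s)) • 1 - ((k : ℝ) - s) • A + (μ : ℝ) • J := ⟨_, rfl⟩
  have hPapp : ∀ i j : V, P i j = ((k : ℝ) - r) * A i j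
      - s * ((k : ℝ) - r) * (1 : Matrix V V ℝ) i j - (μ : ℝ) := by
    intro i j
    rw [hPdef]
    simp [Matrix.sub_apply, Matrix.smul_apply, hJapp, smul_eq_mul]
  have hQapp : ∀ i j : V, Q i j = r * ((k : ℝ) - s) * (1 : Matrix V V ℝ) i j
      - ((k : ℝ) - s) * A i j + (μ : ℝ) := by
    intro i j
    rw [hQdef]
    simp [Matrix.sub_apply, Matrix.add_apply, Matrix.smul_apply, hJapp, smul_eq_mul]
  have hsymA : ∀ i j : V, A j i = A i j := fun i j => by
    simp [hAapp, SimpleGraph.adj_comm]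
  have hsym1 : ∀ i j : V, (1 : Matrix V V ℝ) j i = (1 : Matrix V V ℝ) i j := fun i j => by
    simp [Matrix.one_apply, eq_comm]
  have hPsym : ∀ i j : V, P j i = P i j := fun i j => by
    rw [hPapp, hPapp, hsymA i j, hsym1 i j]
  have hQsym : ∀ i j : V, Q j i = Q i j := fun i j => by
    rw [hQapp, hQapp, hsymA i j, hsym1 i j]
  have hPP : P * P = (((k : ℝ) - r) * (r - s)) • P := by
    rw [hPdef]
    simp only [sub_mul, mul_sub, smul_mul_assoc, mul_smul_comm, smul_smul, one_mul,
      mul_one, hA2', hAJ, hJA, hJJ, smul_add, smul_sub]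
    match_scalars <;> first | ring1 | linear_combination (μ : ℝ) * hκ
  have hQQ : Q * Q = (((k : ℝ) - s) * (r - s)) • Q := by
    rw [hQdef]
    simp only [sub_mul, mul_sub, add_mul, mul_add, smul_mul_assoc, mul_smul_comm,
      smul_smul, one_mul, mul_one, hA2', hAJ, hJA, hJJ, smul_add, smul_sub]
    match_scalars <;> first | ring1 | linear_combination (μ : ℝ) * hκ
  have hcP : (0 : ℝ) < ((k : ℝ) - r) * (r - s) := by
    rw [hrs]
    exact mul_pos (by linarith) hwpos
  have hcQ : (0 : ℝ) < ((k : ℝ) - s) * (r - s) := by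
    rw [hrs]
    exact mul_pos (by linarith) hwpos
  have hQpsd : Q.PosSemidef := psd_of_sq Q hQsym _ hcQ hQQ
  have hQrow : ∀ x : V, ∑ y : V, Q x y = 0 := by
    intro x
    simp_rw [hQapp]
    rw [Finset.sum_add_distrib, Finset.sum_sub_distrib, ← Finset.mul_sum, ← Finset.mul_sum,
      h1row, hdegR, Finset.sum_const, Finset.card_univ, nsmul_eq_mul, mul_one, hνcard]
    linear_combination hκ
  -- trace and multiplicity
  have htrJ : J.trace = (ν : ℝ) := by
    rw [Matrix.trace]
    simp_rw [Matrix.diag, hJapp]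
    rw [Finset.sum_const, Finset.card_univ, nsmul_eq_mul, mul_one, hνcard]
  have htrA : A.trace = 0 := by simp [hAdef]
  have htr1 : (1 : Matrix V V ℝ).trace = (ν : ℝ) := by
    rw [Matrix.trace_one, hνcard]
  have htrP : P.trace = (ν : ℝ) * (-s * ((k : ℝ) - r) - μ) := by
    rw [hPdef, Matrix.trace_sub, Matrix.trace_sub, Matrix.trace_smul, Matrix.trace_smul,
      Matrix.trace_smul, htrA, htrJ, htr1]
    simp only [smul_eq_mul]
    ring
  obtain ⟨f, hf⟩ := trace_idem_nat ((((k : ℝ) - r) * (r - s))⁻¹ • P) (by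
    rw [Matrix.smul_mul, Matrix.mul_smul, hPP, smul_smul, smul_smul]
    congr 1
    field_simp)
  have htr : (ν : ℝ) * (-s * ((k : ℝ) - r) - μ) = (f : ℝ) * (((k : ℝ) - r) * (r - s)) := by
    rw [Matrix.trace_smul, htrP, smul_eq_mul] at hf
    have hne := ne_of_gt hcP
    field_simp at hf
    rw [div_eq_iff hne] at hf
    linarith [hf]
  -- integer bookkeeping
  obtain ⟨eI, heI⟩ : ∃ e : ℤ, e = (l : ℤ) - μ := ⟨_, rfl⟩
  obtain ⟨ΔI, hΔI⟩ : ∃ d : ℤ, d = eI ^ 2 + 4 * ((k : ℤ) - μ) := ⟨_, rfl⟩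
  have hμkI : (μ : ℤ) ≤ k := by exact_mod_cast hμk
  have hΔI0 : 0 ≤ ΔI := by rw [hΔI]; nlinarith [sq_nonneg eI]
  have heR : ((eI : ℤ) : ℝ) = (l : ℝ) - μ := by rw [heI]; push_cast; ring
  have hcastΔ : ((ΔI : ℤ) : ℝ) = ((l : ℝ) - μ) ^ 2 + 4 * ((k : ℝ) - μ) := by
    rw [hΔI, heI]; push_cast; ring
  have hwΔ : w = Real.sqrt ((ΔI : ℤ) : ℝ) := by rw [hw_def, hcastΔ]
  -- the crucial eigenvalue bound
  have hs32 : s ≤ -(3 / 2 : ℝ) := by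
    by_cases hirr : Irrational w
    · -- irrational case: conference-like graph
      have htr2 := htr
      rw [hrw, hsw] at htr2
      obtain ⟨q1I, hq1I⟩ : ∃ q : ℤ,
          q = -(ν : ℤ) * (eI * (2 * (k : ℤ) - eI) + ΔI) - 4 * (ν : ℤ) * μ
            + 2 * (f : ℤ) * ΔI := ⟨_, rfl⟩
      obtain ⟨q2I, hq2I⟩ : ∃ q : ℤ,
          q = 2 * (ν : ℤ) * (k : ℤ) - 2 * (f : ℤ) * (2 * (k : ℤ) - eI) := ⟨_, rfl⟩
      have hkey : (q1I : ℝ) + (q2I : ℝ) * w = 0 := by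
        rw [hq1I, hq2I, hΔI, heI]
        push_cast
        linear_combination 4 * htr2 + ((ν : ℝ) - 2 * (f : ℝ)) * hw2
      have hq2 : q2I = 0 := by
        by_contra hq2ne
        apply hirr
        refine ⟨(-q1I : ℚ) / (q2I : ℚ), ?_⟩
        have hq2R : ((q2I : ℤ) : ℝ) ≠ 0 := by exact_mod_cast hq2ne
        push_cast
        rw [div_eq_iff hq2R]
        linarith [hkey]
      have hq1 : (q1I : ℝ) = 0 := by
        rw [hq2] at hkey
        simpa using hkey
      have hq1' : -(ν : ℝ) * (((l : ℝ) - μ) * (2 * (k : ℝ) - ((l : ℝ) - μ))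
          + (((l : ℝ) - μ) ^ 2 + 4 * ((k : ℝ) - μ))) - 4 * (ν : ℝ) * μ
          + 2 * (f : ℝ) * (((l : ℝ) - μ) ^ 2 + 4 * ((k : ℝ) - μ)) = 0 := by
        rw [hq1I, hΔI, heI] at hq1
        push_cast at hq1
        linarith [hq1]
      have hq2' : 2 * (ν : ℝ) * (k : ℝ)
          - 2 * (f : ℝ) * (2 * (k : ℝ) - ((l : ℝ) - μ)) = 0 := by
        have : ((q2I : ℤ) : ℝ) = 0 := by exact_mod_cast hq2
        rw [hq2I, heI] at this
        push_cast at this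
        linarith [this]
      have P1 : (-4 * (ν : ℝ) * k) * ((k : ℝ) * ((l : ℝ) - μ) - ((l : ℝ) - μ) ^ 2
          - ((l : ℝ) - μ) + 2 * μ) = 0 := by
        linear_combination (2 * (k : ℝ) - ((l : ℝ) - μ)) * hq1'
          + (((l : ℝ) - μ) ^ 2 + 4 * ((k : ℝ) - μ)) * hq2'
      have hfac : (k : ℝ) * ((l : ℝ) - μ) - ((l : ℝ) - μ) ^ 2 - ((l : ℝ) - μ) + 2 * μ = 0 := by
        rcases mul_eq_zero.mp P1 with h | h
        · exfalso
          have hν0 : (0 : ℝ) < ν := by linarith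
          have hk0 : (0 : ℝ) < k := by linarith
          have : (0 : ℝ) < 4 * (ν : ℝ) * k :=
            mul_pos (mul_pos (by norm_num) hν0) hk0
          linarith
        · exact h
      have heneg : (l : ℝ) - μ < 0 := by
        by_contra h
        push_neg at h
        have h3 : (0 : ℝ) ≤ (k : ℝ) - ((l : ℝ) - μ) - 1 := by linarith
        have h4 : 0 ≤ ((l : ℝ) - μ) * ((k : ℝ) - ((l : ℝ) - μ) - 1) := mul_nonneg h h3
        have h5 : ((l : ℝ) - μ) * ((k : ℝ) - ((l : ℝ) - μ) - 1)
            = (k : ℝ) * ((l : ℝ) - μ) - ((l : ℝ) - μ) ^ 2 - ((l : ℝ) - μ) := by ring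
        rw [h5] at h4
        linarith [h4, hfac, hμ1R]
      have heI1 : eI ≤ -1 := by
        have h1 : (eI : ℝ) < 0 := by rw [heR]; exact heneg
        have h2 : eI < 0 := by exact_mod_cast h1
        omega
      have hkμ2 : (μ : ℝ) + 1 ≤ k := by
        have hkne : k ≠ μ := by
          intro hkm
          apply hirr
          refine ⟨((eI.natAbs : ℤ) : ℚ), ?_⟩
          have hΔe : ((ΔI : ℤ) : ℝ) = ((eI : ℤ) : ℝ) ^ 2 := by
            rw [hΔI]
            push_cast [hkm]
            ring
          rw [hwΔ, hΔe, Real.sqrt_sq_eq_abs]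
          push_cast [Nat.cast_natAbs]
          norm_num
        have : μ < k := lt_of_le_of_ne hμk (Ne.symm hkne)
        exact_mod_cast this
      have hwge2 : 2 ≤ w := by
        rw [hw_def, show (2 : ℝ) = Real.sqrt 4 by
          rw [show (4 : ℝ) = 2 ^ 2 by norm_num, Real.sqrt_sq (by norm_num)]]
        exact Real.sqrt_le_sqrt (by linarith [hkμ2, sq_nonneg ((l : ℝ) - μ)])
      have hele : (l : ℝ) - μ ≤ -1 := by
        rw [← heR]
        exact_mod_cast heI1
      rw [hsw]
      linarith
    · -- rational case: integer eigenvalues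
      have hnsq : IsSquare ΔI := by
        by_contra hns
        exact hirr (hwΔ ▸ irrational_sqrt_intCast_iff.mpr ⟨hns, hΔI0⟩)
      obtain ⟨m0, hm0⟩ := hnsq
      have hmm : ΔI = ((m0.natAbs : ℤ)) * ((m0.natAbs : ℤ)) := by
        rw [hm0, ← Int.natAbs_mul_self]
        push_cast
        ring
      obtain ⟨M, hM0, hMM⟩ : ∃ M : ℤ, 0 ≤ M ∧ ΔI = M * M :=
        ⟨(m0.natAbs : ℤ), Int.natCast_nonneg _, hmm⟩
      have hwM : w = (M : ℝ) := by
        have hcast : ((ΔI : ℤ) : ℝ) = (M : ℝ) * (M : ℝ) := by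
          rw [hMM]; push_cast; ring
        rw [hwΔ, hcast, Real.sqrt_mul_self (by exact_mod_cast hM0)]
      have heven : Even (eI - M) := by
        have h4 : M * M - eI * eI = 4 * ((k : ℤ) - μ) := by rw [← hMM, hΔI]; ring
        have hev : Even (M * M - eI * eI) := ⟨2 * ((k : ℤ) - μ), by linarith⟩
        have hMM' : Even (M * M) ↔ Even (eI * eI) := Int.even_sub.mp hev
        simp only [Int.even_mul, or_self] at hMM'
        rw [Int.even_sub]
        tauto
      obtain ⟨c, hc⟩ := heven
      have hsc : s = (c : ℝ) := by
        have h1 : (eI : ℝ) - M = (c : ℝ) + c := by exact_mod_cast congrArg (Int.cast : ℤ → ℝ) hc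
        rw [hsw, ← heR, hwM]
        linarith
      have hcneg : c ≤ -1 := by
        have h1 : (c : ℝ) < 0 := hsc ▸ hs0
        have h2 : c < 0 := by exact_mod_cast h1
        omega
      have hcne : c ≠ -1 := by
        intro hc1
        have hsm1 : s = -1 := by rw [hsc, hc1]; norm_num
        have hquad : s ^ 2 - ((l : ℝ) - μ) * s + ((μ : ℝ) - k) = 0 := by
          rw [hsw]; linear_combination (1 / 4 : ℝ) * hw2
        rw [hsm1] at hquad
        have h5 : (l : ℝ) + 1 = k := by linarith [hquad]
        have h6 : l + 1 = k := by exact_mod_cast h5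
        exact hlne h6
      have hc2 : c ≤ -2 := by omega
      have : (c : ℝ) ≤ -2 := by exact_mod_cast hc2
      rw [hsc]
      linarith
  -- the distortion value
  obtain ⟨Dsq, hDsqdef⟩ : ∃ d : ℝ, d = 4 * (-1 - s) / (-s) := ⟨_, rfl⟩
  have hsneg : (0 : ℝ) < -s := by linarith
  have hDsq1 : 1 ≤ Dsq := by
    rw [hDsqdef, le_div_iff₀ hsneg]
    linarith [hs32]
  have hDsq0 : (0 : ℝ) ≤ Dsq := by linarith
  -- the Gram matrix and the embedding
  obtain ⟨M, hMdef⟩ : ∃ M : Matrix V V ℝ, M = (2 / ((-s) * ((k : ℝ) - r))) • P := ⟨_, rfl⟩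
  have hβpos : (0 : ℝ) < 2 / ((-s) * ((k : ℝ) - r)) := by
    apply div_pos (by norm_num)
    exact mul_pos hsneg (by linarith)
  have hMsym : ∀ i j : V, M j i = M i j := fun i j => by
    rw [hMdef]; simp [Matrix.smul_apply, hPsym i j]
  have hMM : M * M = ((2 / ((-s) * ((k : ℝ) - r))) * (((k : ℝ) - r) * (r - s))) • M := by
    rw [hMdef, Matrix.smul_mul, Matrix.mul_smul, hPP, smul_smul, smul_smul, smul_smul]
    congr 1
    ring
  have hMpsd : M.PosSemidef := psd_of_sq M hMsym _ (mul_pos hβpos hcP) hMM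
  obtain ⟨ρE, hρE⟩ := gram_vectors M hMpsd
  have hMentry : ∀ i j : V, M i j = (2 / ((-s) * ((k : ℝ) - r))) * P i j := fun i j => by
    rw [hMdef]; simp
  have hsne : s ≠ 0 := by linarith
  have hkrne : (k : ℝ) - r ≠ 0 := by linarith
  have hdist_adj : ∀ x y : V, G.Adj x y → ‖ρE x - ρE y‖ ^ 2 = Dsq := by
    intro x y h
    have hAxx : A x x = 0 := by rw [hAapp]; simp [G.irrefl]
    have hAyy : A y y = 0 := by rw [hAapp]; simp [G.irrefl]
    have hAxy : A x y = 1 := by rw [hAapp]; simp [h]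
    have h1xx : (1 : Matrix V V ℝ) x x = 1 := Matrix.one_apply_eq x
    have h1yy : (1 : Matrix V V ℝ) y y = 1 := Matrix.one_apply_eq y
    have h1xy : (1 : Matrix V V ℝ) x y = 0 := Matrix.one_apply_ne h.ne
    rw [hρE, hMentry, hMentry, hMentry, hPapp, hPapp, hPapp, hAxx, hAyy, hAxy,
      h1xx, h1yy, h1xy, hDsqdef]
    field_simp
    ring
  have hdist_nadj : ∀ x y : V, x ≠ y → ¬G.Adj x y → ‖ρE x - ρE y‖ ^ 2 = 4 := by
    intro x y hxy h
    have hAxx : A x x = 0 := by rw [hAapp]; simp [G.irrefl]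
    have hAyy : A y y = 0 := by rw [hAapp]; simp [G.irrefl]
    have hAxy : A x y = 0 := by rw [hAapp]; simp [h]
    have h1xx : (1 : Matrix V V ℝ) x x = 1 := Matrix.one_apply_eq x
    have h1yy : (1 : Matrix V V ℝ) y y = 1 := Matrix.one_apply_eq y
    have h1xy : (1 : Matrix V V ℝ) x y = 0 := Matrix.one_apply_ne hxy
    rw [hρE, hMentry, hMentry, hMentry, hPapp, hPapp, hPapp, hAxx, hAyy, hAxy,
      h1xx, h1yy, h1xy]
    field_simp
    ring
  have hdist2 : ∀ x y : V, x ≠ y → ¬G.Adj x y → G.dist x y = 2 := by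
    intro x y hxy hna
    have h0 : G.dist x y ≠ 0 := fun h => hxy ((hconn x y).dist_eq_zero_iff.mp h)
    have h1 : G.dist x y ≠ 1 := fun h => hna (SimpleGraph.dist_eq_one_iff_adj.mp h)
    have := hdiam_le x y
    omega
  obtain ⟨Dstar, hDstardef⟩ : ∃ d : ℝ, d = Real.sqrt Dsq := ⟨_, rfl⟩
  have hDstar2 : Dstar ^ 2 = Dsq := by rw [hDstardef]; exact Real.sq_sqrt hDsq0
  have hDstar1 : 1 ≤ Dstar := by
    rw [hDstardef, show (1 : ℝ) = Real.sqrt 1 by simp]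
    exact Real.sqrt_le_sqrt hDsq1
  have hDstar0 : 0 ≤ Dstar := by linarith
  have hmem : Dstar ∈ {D : ℝ | ∃ (m : ℕ) (ρ : V → EuclideanSpace ℝ (Fin m)),
      ∀ x y : V, (G.dist x y : ℝ) ≤ ‖ρ x - ρ y‖ ∧ ‖ρ x - ρ y‖ ≤ D * (G.dist x y : ℝ)} := by
    refine ⟨Fintype.card V, ρE, fun x y => ?_⟩
    rcases eq_or_ne x y with rfl | hxy
    · simp [SimpleGraph.dist_self]
    · by_cases hadj : G.Adj x y
      · have hd1 : G.dist x y = 1 := SimpleGraph.dist_eq_one_iff_adj.mpr hadj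
        have hn : ‖ρE x - ρE y‖ = Dstar := by
          rw [← Real.sqrt_sq (norm_nonneg (ρE x - ρE y)), hdist_adj x y hadj, hDstardef]
        rw [hd1, hn]
        push_cast
        constructor
        · linarith
        · linarith
      · have hd2 : G.dist x y = 2 := hdist2 x y hxy hadj
        have hn : ‖ρE x - ρE y‖ = 2 := by
          rw [← Real.sqrt_sq (norm_nonneg (ρE x - ρE y)), hdist_nadj x y hxy hadj]
          rw [show (4 : ℝ) = 2 ^ 2 by norm_num, Real.sqrt_sq (by norm_num)]
        rw [hd2, hn]
        push_cast
        constructor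
        · linarith
        · linarith
  have hlb : ∀ D ∈ {D : ℝ | ∃ (m : ℕ) (ρ : V → EuclideanSpace ℝ (Fin m)),
      ∀ x y : V, (G.dist x y : ℝ) ≤ ‖ρ x - ρ y‖ ∧ ‖ρ x - ρ y‖ ≤ D * (G.dist x y : ℝ)},
      Dstar ≤ D := by
    rintro D ⟨m, ρ, hρ⟩
    have hD1 : 1 ≤ D := by
      have h := hρ x₀ z₀
      rw [SimpleGraph.dist_eq_one_iff_adj.mpr hxz₀] at h
      push_cast at h
      linarith [h.1, h.2, norm_nonneg (ρ x₀ - ρ z₀)]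
    have hnormsq : ∀ x y : V, ‖ρ x - ρ y‖ ^ 2 = ∑ i, (ρ x i - ρ y i) ^ 2 := by
      intro x y
      rw [EuclideanSpace.norm_eq, Real.sq_sqrt (by positivity)]
      simp_rw [show ∀ i, (ρ x - ρ y) i = ρ x i - ρ y i from fun i => rfl]
      simp [sq_abs]
    have hT : ∑ x : V, ∑ y : V, Q x y * ‖ρ x - ρ y‖ ^ 2 ≤ 0 := by
      have heq : ∑ x : V, ∑ y : V, Q x y * ‖ρ x - ρ y‖ ^ 2
          = ∑ i : Fin m, ∑ x : V, ∑ y : V, Q x y * (ρ x i - ρ y i) ^ 2 := by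
        simp_rw [hnormsq, Finset.mul_sum]
        rw [Finset.sum_congr rfl fun x _ => Finset.sum_comm]
        exact Finset.sum_comm
      rw [heq]
      apply Finset.sum_nonpos
      intro i _
      exact quad_sum_nonpos Q hQpsd hQrow (fun v => ρ v i)
    -- expand the quadratic sum
    have hTsplit : ∑ x : V, ∑ y : V, Q x y * ‖ρ x - ρ y‖ ^ 2
        = -((k : ℝ) - s) * (∑ x : V, ∑ y : V, A x y * ‖ρ x - ρ y‖ ^ 2)
          + (μ : ℝ) * (∑ x : V, ∑ y : V, ‖ρ x - ρ y‖ ^ 2)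
          + r * ((k : ℝ) - s) * (∑ x : V, ∑ y : V,
              (1 : Matrix V V ℝ) x y * ‖ρ x - ρ y‖ ^ 2) := by
      have hterm : ∀ x y : V, Q x y * ‖ρ x - ρ y‖ ^ 2
          = r * ((k : ℝ) - s) * ((1 : Matrix V V ℝ) x y * ‖ρ x - ρ y‖ ^ 2)
            - ((k : ℝ) - s) * (A x y * ‖ρ x - ρ y‖ ^ 2)
            + (μ : ℝ) * ‖ρ x - ρ y‖ ^ 2 := fun x y => by rw [hQapp]; ring
      simp_rw [hterm, Finset.sum_add_distrib, Finset.sum_sub_distrib, ← Finset.mul_sum]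
      ring
    have hdiagzero : ∑ x : V, ∑ y : V, (1 : Matrix V V ℝ) x y * ‖ρ x - ρ y‖ ^ 2 = 0 := by
      refine Finset.sum_eq_zero fun x _ => Finset.sum_eq_zero fun y _ => ?_
      rcases eq_or_ne x y with rfl | hxy
      · simp
      · rw [Matrix.one_apply_ne hxy, zero_mul]
    have hSA_le : ∑ x : V, ∑ y : V, A x y * ‖ρ x - ρ y‖ ^ 2 ≤ D ^ 2 * ((ν : ℝ) * k) := by
      have step1 : ∑ x : V, ∑ y : V, A x y * ‖ρ x - ρ y‖ ^ 2
          ≤ ∑ x : V, ∑ y : V, A x y * D ^ 2 := by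
        refine Finset.sum_le_sum fun x _ => Finset.sum_le_sum fun y _ => ?_
        by_cases hadj : G.Adj x y
        · have hd1 : G.dist x y = 1 := SimpleGraph.dist_eq_one_iff_adj.mpr hadj
          have h := (hρ x y).2
          rw [hd1] at h
          push_cast at h
          rw [mul_one] at h
          have hA1 : A x y = 1 := by rw [hAapp]; simp [hadj]
          rw [hA1, one_mul, one_mul]
          exact pow_le_pow_left₀ (norm_nonneg _) h 2
        · have hA0 : A x y = 0 := by rw [hAapp]; simp [hadj]
          rw [hA0, zero_mul, zero_mul]
      have step2 : ∑ x : V, ∑ y : V, A x y * D ^ 2 = D ^ 2 * ((ν : ℝ) * k) := by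
        have hrow' : ∀ x : V, ∑ y : V, A x y * D ^ 2 = (k : ℝ) * D ^ 2 := fun x => by
          rw [← Finset.sum_mul, hdegR x]
        simp_rw [hrow']
        rw [Finset.sum_const, Finset.card_univ, nsmul_eq_mul]
        rw [hνcard]
        ring
      linarith [step1, step2.le, step2.ge]
    have hSN_ge : (∑ x : V, ∑ y : V, A x y * ‖ρ x - ρ y‖ ^ 2)
        + 4 * ((ν : ℝ) * ((ν : ℝ) - 1 - k))
        ≤ ∑ x : V, ∑ y : V, ‖ρ x - ρ y‖ ^ 2 := by
      have termwise : ∀ x y : V, A x y * ‖ρ x - ρ y‖ ^ 2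
          + 4 * (1 - (1 : Matrix V V ℝ) x y - A x y) ≤ ‖ρ x - ρ y‖ ^ 2 := by
        intro x y
        rcases eq_or_ne x y with rfl | hxy
        · have hA0 : A x x = 0 := by rw [hAapp]; simp [G.irrefl]
          rw [hA0, Matrix.one_apply_eq]
          simp
        · by_cases hadj : G.Adj x y
          · have hA1 : A x y = 1 := by rw [hAapp]; simp [hadj]
            rw [hA1, Matrix.one_apply_ne hxy]
            norm_num
          · have hA0 : A x y = 0 := by rw [hAapp]; simp [hadj]
            have hd2 : G.dist x y = 2 := hdist2 x y hxy hadj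
            have h := (hρ x y).1
            rw [hd2] at h
            push_cast at h
            have h4 : (2 : ℝ) ^ 2 ≤ ‖ρ x - ρ y‖ ^ 2 := pow_le_pow_left₀ (by norm_num) h 2
            rw [hA0, Matrix.one_apply_ne hxy]
            norm_num
            linarith [h4]
      have hcount : ∑ x : V, ∑ y : V,
          (4 : ℝ) * (1 - (1 : Matrix V V ℝ) x y - A x y)
          = 4 * ((ν : ℝ) * ((ν : ℝ) - 1 - k)) := by
        have hrow' : ∀ x : V, ∑ y : V, (4 : ℝ) * (1 - (1 : Matrix V V ℝ) x y - A x y)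
            = 4 * ((ν : ℝ) - 1 - k) := by
          intro x
          rw [← Finset.mul_sum, Finset.sum_sub_distrib, Finset.sum_sub_distrib,
            h1row, hdegR, Finset.sum_const, Finset.card_univ, nsmul_eq_mul, mul_one, hνcard]
        simp_rw [hrow']
        rw [Finset.sum_const, Finset.card_univ, nsmul_eq_mul, hνcard]
        ring
      calc (∑ x : V, ∑ y : V, A x y * ‖ρ x - ρ y‖ ^ 2) + 4 * ((ν : ℝ) * ((ν : ℝ) - 1 - k))
          = ∑ x : V, ∑ y : V, (A x y * ‖ρ x - ρ y‖ ^ 2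
              + 4 * (1 - (1 : Matrix V V ℝ) x y - A x y)) := by
            rw [← hcount]
            rw [← Finset.sum_add_distrib]
            refine Finset.sum_congr rfl fun x _ => ?_
            rw [← Finset.sum_add_distrib]
        _ ≤ ∑ x : V, ∑ y : V, ‖ρ x - ρ y‖ ^ 2 :=
            Finset.sum_le_sum fun x _ => Finset.sum_le_sum fun y _ => termwise x y
    -- combine
    have h1 : (μ : ℝ) * (∑ x : V, ∑ y : V, ‖ρ x - ρ y‖ ^ 2)
        ≤ ((k : ℝ) - s) * (∑ x : V, ∑ y : V, A x y * ‖ρ x - ρ y‖ ^ 2) := by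
      have := hT
      rw [hTsplit, hdiagzero, mul_zero, add_zero] at this
      linarith
    have hμ0 : (0 : ℝ) ≤ μ := by linarith
    have h2 := mul_le_mul_of_nonneg_left hSN_ge hμ0
    have hksμ : (0 : ℝ) ≤ (k : ℝ) - s - μ := by linarith
    have h5 := mul_le_mul_of_nonneg_left hSA_le hksμ
    have hfinal : 4 * (μ : ℝ) * ν * ((ν : ℝ) - 1 - k)
        ≤ ((k : ℝ) - s - μ) * (D ^ 2 * ((ν : ℝ) * k)) := by
      linarith only [h1, h2, h5]
    have hId : Dsq * (((k : ℝ) - s - μ) * ((ν : ℝ) * k))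
        = 4 * (μ : ℝ) * ν * ((ν : ℝ) - 1 - k) := by
      rw [hDsqdef, div_mul_eq_mul_div, div_eq_iff (ne_of_gt hsneg)]
      linear_combination (4 * (ν : ℝ) * s) * hstar + (4 * (ν : ℝ) * k * (-1 - s)) * hprod
    have hCpos : (0 : ℝ) < ((k : ℝ) - s - μ) * ((ν : ℝ) * k) := by
      apply mul_pos (by linarith)
      apply mul_pos (by linarith) (by linarith)
    have hDsqle : Dsq ≤ D ^ 2 := by
      have hchain : Dsq * (((k : ℝ) - s - μ) * ((ν : ℝ) * k))
          ≤ D ^ 2 * (((k : ℝ) - s - μ) * ((ν : ℝ) * k)) := by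
        rw [hId]
        calc 4 * (μ : ℝ) * ν * ((ν : ℝ) - 1 - k)
            ≤ ((k : ℝ) - s - μ) * (D ^ 2 * ((ν : ℝ) * k)) := hfinal
          _ = D ^ 2 * (((k : ℝ) - s - μ) * ((ν : ℝ) * k)) := by ring
      exact le_of_mul_le_mul_right hchain hCpos
    rw [hDstardef]
    calc Real.sqrt Dsq ≤ Real.sqrt (D ^ 2) := Real.sqrt_le_sqrt hDsqle
      _ = D := Real.sqrt_sq (by linarith)
  -- conclude
  have hinf : leastDistortion G = Dstar := by
    unfold leastDistortion
    apply le_antisymm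
    · exact csInf_le ⟨Dstar, fun D hD => hlb D hD⟩ hmem
    · exact le_csInf ⟨Dstar, hmem⟩ hlb
  rw [hinf, hDstar2, hDsqdef]
  have hden2 : ((k : ℝ) * ((ν : ℝ) - k + r)) ≠ 0 := by
    have : (0 : ℝ) < (k : ℝ) * ((ν : ℝ) - k + r) :=
      mul_pos (by linarith) (by linarith)
    exact ne_of_gt this
  rw [div_eq_div_iff (ne_of_gt hsneg) hden2]
  linear_combination (-4 : ℝ) * hstar - 4 * ((ν : ℝ) - 1 - k) * hprod
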